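/- arXiv:2202.04616 — 2 statements merged into one kernel-verified Lean document; each statement's English description precedes it below -/
import Mathlib

section
/- Let 0 < a < b and let f be a twice continuously differentiable, strictly positive function on [a,b]. Define L(y) = (∫_a^y x f(x) dx)/(∫_a^y f(x) dx) for y ∈ (a,b]. Then there exists y* ∈ (a,b] such that the function y ↦ L(y)/y is (weakly) decreasing on (a, y*]. -/
open MeasureTheory Set Filter Topology

/-- Pressed-ratio monotonicity near the lower endpoint: for a twice continuously
differentiable, strictly positive density on `[a,b]` with `0 < a < b`, there is
`y* ∈ (a,b]` such that `y ↦ L(y)/y` is weakly decreasing on `(a, y*]`. -/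
theorem stmt4 (a b : ℝ) (ha : 0 < a) (hab : a < b) (f : ℝ → ℝ)
    (hf : ContDiffOn ℝ 2 f (Icc a b)) (hf_pos : ∀ x ∈ Icc a b, 0 < f x) :
    ∃ ystar ∈ Ioc a b,
      AntitoneOn (fun y => ((∫ x in a..y, x * f x) / (∫ x in a..y, f x)) / y)
        (Ioc a ystar) := by
  have hfc : ContinuousOn f (Icc a b) := hf.continuousOn
  set c := f a with hc
  have hcpos : 0 < c := hf_pos a ⟨le_refl a, hab.le⟩
  have hcw : ContinuousWithinAt f (Icc a b) a := hfc a ⟨le_refl a, hab.le⟩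
  rw [Metric.continuousWithinAt_iff] at hcw
  obtain ⟨δ, hδpos, hδ⟩ := hcw (c / 10) (by positivity)
  set d : ℝ := min (δ / 2) (a / 4) with hd
  have hdpos : 0 < d := lt_min (by linarith) (by linarith)
  have hdδ : d ≤ δ / 2 := min_le_left _ _
  have hda : d ≤ a / 4 := min_le_right _ _
  set ystar : ℝ := min ((a + b) / 2) (a + d) with hy
  have hYa : a < ystar := lt_min (by linarith) (by linarith)
  have hYb : ystar < b := lt_of_le_of_lt (min_le_left _ _) (by linarith)
  have hYd : ystar ≤ a + d := min_le_right _ _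
  refine ⟨ystar, ⟨hYa, hYb.le⟩, ?_⟩
  -- bounds on f near a
  have hbound : ∀ x ∈ Icc a ystar, 9 * c / 10 ≤ f x ∧ f x ≤ 11 * c / 10 := by
    intro x hx
    have hxb : x ∈ Icc a b := ⟨hx.1, le_trans hx.2 hYb.le⟩
    have hdx : dist x a < δ := by
      rw [Real.dist_eq, abs_of_nonneg (by linarith [hx.1])]
      have := hx.2
      linarith
    have h := hδ hxb hdx
    rw [Real.dist_eq, abs_lt] at h
    constructor <;> [linarith [h.2]; linarith [h.1]]
  -- integrability
  have hIcc : ∀ y ∈ Ioc a ystar, ContinuousOn f (uIcc a y) := by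
    intro y hy
    rw [uIcc_of_le hy.1.le]
    exact hfc.mono (Icc_subset_Icc_right (le_trans hy.2 hYb.le))
  have hInt : ∀ y ∈ Ioc a ystar, IntervalIntegrable f volume a y := fun y hy =>
    (hIcc y hy).intervalIntegrable
  have hIntM : ∀ y ∈ Ioc a ystar, IntervalIntegrable (fun x => x * f x) volume a y :=
    fun y hy => (continuousOn_id.mul (hIcc y hy)).intervalIntegrable
  -- lower bound on F
  have hFlb : ∀ y ∈ Ioc a ystar, 9 * c / 10 * (y - a) ≤ ∫ x in a..y, f x := by
    intro y hy
    have h1 : (∫ _x in a..y, (9 * c / 10 : ℝ)) ≤ ∫ x in a..y, f x :=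
      intervalIntegral.integral_mono_on hy.1.le intervalIntegrable_const (hInt y hy)
        (fun x hx => (hbound x ⟨hx.1, le_trans hx.2 hy.2⟩).1)
    rw [intervalIntegral.integral_const, smul_eq_mul] at h1
    linarith
  -- lower bound on M
  have hMlb : ∀ y ∈ Ioc a ystar, a * (9 * c / 10) * (y - a) ≤ ∫ x in a..y, x * f x := by
    intro y hy
    have h1 : (∫ _x in a..y, a * (9 * c / 10)) ≤ ∫ x in a..y, x * f x := by
      refine intervalIntegral.integral_mono_on hy.1.le intervalIntegrable_const (hIntM y hy) ?_
      intro x hx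
      have hb1 := (hbound x ⟨hx.1, le_trans hx.2 hy.2⟩).1
      nlinarith [hx.1]
    rw [intervalIntegral.integral_const, smul_eq_mul] at h1
    linarith
  -- M ≤ y F
  have hMub : ∀ y ∈ Ioc a ystar, (∫ x in a..y, x * f x) ≤ y * ∫ x in a..y, f x := by
    intro y hy
    rw [← intervalIntegral.integral_const_mul]
    refine intervalIntegral.integral_mono_on hy.1.le (hIntM y hy)
      ((hInt y hy).const_mul y) ?_
    intro x hx
    have hb1 := (hbound x ⟨hx.1, le_trans hx.2 hy.2⟩).1
    have : 0 ≤ f x := by linarith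
    nlinarith [hx.2]
  -- upper bound on y F − M
  have hsub : ∀ y ∈ Ioc a ystar,
      y * (∫ x in a..y, f x) - (∫ x in a..y, x * f x) ≤ 11 * c / 10 * ((y - a) ^ 2 / 2) := by
    intro y hy
    have e0 : y * (∫ x in a..y, f x) - (∫ x in a..y, x * f x)
        = ∫ x in a..y, (y - x) * f x := by
      rw [← intervalIntegral.integral_const_mul,
        ← intervalIntegral.integral_sub ((hInt y hy).const_mul y) (hIntM y hy)]
      congr 1
      funext x
      ring
    have hIntL : IntervalIntegrable (fun x => (y - x) * f x) volume a y :=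
      (((continuous_const.sub continuous_id).continuousOn).mul (hIcc y hy)).intervalIntegrable
    have hIntR : IntervalIntegrable (fun x => (y - x) * (11 * c / 10)) volume a y :=
      (((continuous_const.sub continuous_id).mul continuous_const).continuousOn).intervalIntegrable
    have h1 : (∫ x in a..y, (y - x) * f x) ≤ ∫ x in a..y, (y - x) * (11 * c / 10) := by
      refine intervalIntegral.integral_mono_on hy.1.le hIntL hIntR ?_
      intro x hx
      have hb2 := (hbound x ⟨hx.1, le_trans hx.2 hy.2⟩).2
      have hxy : 0 ≤ y - x := by linarith [hx.2]
      exact mul_le_mul_of_nonneg_left hb2 hxy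
    have e1 : (∫ x in a..y, (y - x) * (11 * c / 10)) = 11 * c / 10 * ((y - a) ^ 2 / 2) := by
      have e2 : (fun x => (y - x) * (11 * c / 10))
          = fun x => y * (11 * c / 10) - x * (11 * c / 10) := by
        funext x; ring
      have i1 : IntervalIntegrable (fun x : ℝ => x * (11 * c / 10)) volume a y :=
        (continuous_id.mul continuous_const).intervalIntegrable a y
      rw [e2, intervalIntegral.integral_sub intervalIntegrable_const i1,
        intervalIntegral.integral_const, intervalIntegral.integral_mul_const,
        integral_id, smul_eq_mul]
      ring
    rw [e0]
    linarith [h1, e1.le, e1.ge]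
  -- derivative information
  have hderiv : ∀ y ∈ Ioc a ystar, ∃ D,
      HasDerivAt (fun u => ((∫ x in a..u, x * f x) / (∫ x in a..u, f x)) / u) D y ∧ D ≤ 0 := by
    intro y hy
    have hyIoo : y ∈ Ioo a b := ⟨hy.1, lt_of_le_of_lt hy.2 hYb⟩
    have hypos : 0 < y := lt_trans ha hy.1
    have hFpos : 0 < ∫ x in a..y, f x :=
      lt_of_lt_of_le (by nlinarith [hy.1]) (hFlb y hy)
    have hMpos : 0 < ∫ x in a..y, x * f x :=
      lt_of_lt_of_le (mul_pos (mul_pos ha (by linarith)) (by linarith [hy.1])) (hMlb y hy)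
    have hmeasF : StronglyMeasurableAtFilter f (𝓝 y) volume :=
      ContinuousOn.stronglyMeasurableAtFilter isOpen_Ioo
        (hfc.mono Ioo_subset_Icc_self) y hyIoo
    have hmeasM : StronglyMeasurableAtFilter (fun x => x * f x) (𝓝 y) volume :=
      ContinuousOn.stronglyMeasurableAtFilter isOpen_Ioo
        (continuousOn_id.mul (hfc.mono Ioo_subset_Icc_self)) y hyIoo
    have hCA : ContinuousAt f y := hfc.continuousAt (Icc_mem_nhds hyIoo.1 hyIoo.2)
    have hCAM : ContinuousAt (fun x => x * f x) y := continuousAt_id.mul hCA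
    have hF : HasDerivAt (fun u => ∫ x in a..u, f x) (f y) y :=
      intervalIntegral.integral_hasDerivAt_right (hInt y hy) hmeasF hCA
    have hM : HasDerivAt (fun u => ∫ x in a..u, x * f x) (y * f y) y :=
      intervalIntegral.integral_hasDerivAt_right (hIntM y hy) hmeasM hCAM
    have h1 := hM.div hF hFpos.ne'
    have h2 := h1.div (hasDerivAt_id y) hypos.ne'
    refine ⟨_, h2, ?_⟩
    -- show the derivative value is ≤ 0
    set Fy := ∫ x in a..y, f x
    set My := ∫ x in a..y, x * f x
    have hflb := (hbound y ⟨hy.1.le, hy.2⟩).1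
    have hfub := (hbound y ⟨hy.1.le, hy.2⟩).2
    have hy54 : y ≤ 5 * a / 4 := by
      have := hy.2
      linarith
    have hsnn : 0 ≤ y * Fy - My := by linarith [hMub y hy]
    have hh1 : y * f y ≤ 5 * a / 4 * (11 * c / 10) :=
      mul_le_mul hy54 hfub (by linarith) (by linarith)
    have hh2 : y * f y * (y * Fy - My)
        ≤ 5 * a / 4 * (11 * c / 10) * (11 * c / 10 * ((y - a) ^ 2 / 2)) :=
      mul_le_mul hh1 (hsub y hy) hsnn (by positivity)
    have hh3 : a * (9 * c / 10) * (y - a) * (9 * c / 10 * (y - a)) ≤ My * Fy := by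
      have hMl := hMlb y hy
      have hFl := hFlb y hy
      have h9 : (0:ℝ) ≤ 9 * c / 10 * (y - a) := by nlinarith [hy.1]
      exact mul_le_mul hMl hFl h9 hMpos.le
    have key : y ^ 2 * f y * Fy - y * f y * My - My * Fy ≤ 0 := by
      nlinarith [hh2, hh3, sq_nonneg (y - a), mul_pos (mul_pos ha hcpos) hcpos,
        mul_nonneg (mul_nonneg (mul_nonneg ha.le hcpos.le) hcpos.le) (sq_nonneg (y - a))]
    have enum : (y * f y * Fy - My * f y) / Fy ^ 2 * y - My / Fy * 1
        = (y ^ 2 * f y * Fy - y * f y * My - My * Fy) / Fy ^ 2 := by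
      field_simp
    simp only [id_eq, Pi.div_apply]
    rw [enum]
    apply div_nonpos_of_nonpos_of_nonneg
    · exact div_nonpos_of_nonpos_of_nonneg key (sq_nonneg _)
    · positivity
  refine antitoneOn_of_deriv_nonpos (convex_Ioc a ystar) ?_ ?_ ?_
  · intro y hy
    obtain ⟨D, hD, _⟩ := hderiv y hy
    exact hD.continuousAt.continuousWithinAt
  · rw [interior_Ioc]
    intro y hy
    obtain ⟨D, hD, _⟩ := hderiv y (Ioo_subset_Ioc_self hy)
    exact hD.differentiableAt.differentiableWithinAt
  · rw [interior_Ioc]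
    intro y hy
    obtain ⟨D, hD, hD0⟩ := hderiv y (Ioo_subset_Ioc_self hy)
    rw [hD.deriv]
    exact hD0
end

section
/- Let a < b with a ≥ 0, and let f be a continuous function on [a,b] with f(a) > 0. Then lim_{y → a⁺} [ f(y) · ∫_a^y (y − x) f(x) dx ] / ( ∫_a^y f(x) dx )² = 1/2. -/
open MeasureTheory Set

private lemma slope_lim (a b : ℝ) (hab : a < b) (g : ℝ → ℝ)
    (hg : ContinuousOn g (Icc a b)) :
    Filter.Tendsto (fun y => (∫ x in a..y, g x) / (y - a)) (nhdsWithin a (Ioi a))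
      (nhds (g a)) := by
  have hmeas : StronglyMeasurableAtFilter g (nhdsWithin a (Ioi a)) :=
    ⟨Icc a b, Icc_mem_nhdsGT_of_mem ⟨le_refl a, hab⟩, hg.aestronglyMeasurable measurableSet_Icc⟩
  have hcw : ContinuousWithinAt g (Ioi a) a :=
    (hg.continuousWithinAt (left_mem_Icc.2 hab.le)).mono_of_mem_nhdsWithin
      (Icc_mem_nhdsGT_of_mem ⟨le_refl a, hab⟩)
  have hD : HasDerivWithinAt (fun u => ∫ x in a..u, g x) (g a) (Ici a) a :=
    intervalIntegral.integral_hasDerivWithinAt_right (IntervalIntegrable.refl ..) hmeas hcw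
  rw [hasDerivWithinAt_iff_tendsto_slope, Ici_sdiff_left] at hD
  refine hD.congr' ?_
  filter_upwards [self_mem_nhdsWithin] with y hy
  simp [slope_def_field, intervalIntegral.integral_same]

/-- The key L'Hôpital limit: `lim_{y→a⁺} f(y)·∫_a^y (y−x)f(x) dx / (∫_a^y f(x) dx)² = 1/2`. -/
theorem stmt5 (a b : ℝ) (hab : a < b) (ha : 0 ≤ a) (f : ℝ → ℝ)
    (hf : ContinuousOn f (Icc a b)) (hfa : 0 < f a) :
    Filter.Tendsto
      (fun y => (f y * ∫ x in a..y, (y - x) * f x) / (∫ x in a..y, f x) ^ 2)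
      (nhdsWithin a (Ioi a)) (nhds (1 / 2)) := by
  set F : ℝ → ℝ := fun y => ∫ x in a..y, f x with hFdef
  set G : ℝ → ℝ := fun y => ∫ x in a..y, x * f x with hGdef
  have hxf : ContinuousOn (fun x => x * f x) (Icc a b) := continuousOn_id.mul hf
  -- slope limits
  have hFlim : Filter.Tendsto (fun y => F y / (y - a)) (nhdsWithin a (Ioi a)) (nhds (f a)) :=
    slope_lim a b hab f hf
  have hGlim : Filter.Tendsto (fun y => G y / (y - a)) (nhdsWithin a (Ioi a)) (nhds (a * f a)) :=
    slope_lim a b hab _ hxf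
  have hyt : Filter.Tendsto (fun y : ℝ => y) (nhdsWithin a (Ioi a)) (nhds a) :=
    Filter.tendsto_id.mono_left nhdsWithin_le_nhds
  have htsub : Filter.Tendsto (fun y : ℝ => y - a) (nhdsWithin a (Ioi a)) (nhds 0) := by
    simpa using hyt.sub_const a
  have hF0 : Filter.Tendsto F (nhdsWithin a (Ioi a)) (nhds 0) := by
    have := hFlim.mul htsub
    rw [mul_zero] at this
    refine this.congr' ?_
    filter_upwards [self_mem_nhdsWithin] with y hy
    have ht : y - a ≠ 0 := sub_ne_zero.2 (ne_of_gt hy)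
    field_simp
  have hG0 : Filter.Tendsto G (nhdsWithin a (Ioi a)) (nhds 0) := by
    have := hGlim.mul htsub
    rw [mul_zero] at this
    refine this.congr' ?_
    filter_upwards [self_mem_nhdsWithin] with y hy
    have ht : y - a ≠ 0 := sub_ne_zero.2 (ne_of_gt hy)
    field_simp
  -- derivatives at interior points
  have hFd : ∀ y ∈ Ioo a b, HasDerivAt F (f y) y := by
    intro y hy
    have hmem : Icc a b ∈ nhds y := Icc_mem_nhds hy.1 hy.2
    exact intervalIntegral.integral_hasDerivAt_right
      ((hf.mono (by rw [uIcc_of_le hy.1.le]; exact Icc_subset_Icc le_rfl hy.2.le)).intervalIntegrable)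
      ⟨Icc a b, hmem, hf.aestronglyMeasurable measurableSet_Icc⟩
      (hf.continuousAt hmem)
  have hGd : ∀ y ∈ Ioo a b, HasDerivAt G (y * f y) y := by
    intro y hy
    have hmem : Icc a b ∈ nhds y := Icc_mem_nhds hy.1 hy.2
    exact intervalIntegral.integral_hasDerivAt_right
      ((hxf.mono (by rw [uIcc_of_le hy.1.le]; exact Icc_subset_Icc le_rfl hy.2.le)).intervalIntegrable)
      ⟨Icc a b, hmem, hxf.aestronglyMeasurable measurableSet_Icc⟩
      (hxf.continuousAt hmem)
  -- L'Hôpital for (y*F y - G y) / (y-a)^2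
  have hlhop : Filter.Tendsto (fun y => (y * F y - G y) / (y - a) ^ 2)
      (nhdsWithin a (Ioi a)) (nhds (f a / 2)) := by
    refine HasDerivAt.lhopital_zero_right_on_Ioo hab
      (f' := fun y => F y) (g' := fun y : ℝ => 2 * (y - a))
      (fun y hy => ?_) (fun y hy => ?_) (fun y hy => ?_) ?_ ?_ ?_
    · have := ((hasDerivAt_id y).mul (hFd y hy)).sub (hGd y hy)
      refine this.congr_deriv ?_
      simp only [id_eq]
      ring
    · have := ((hasDerivAt_id y).sub_const a).pow 2
      refine this.congr_deriv ?_
      simp only [id_eq, pow_one]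
      push_cast
      ring
    · have : (0:ℝ) < y - a := sub_pos.2 hy.1
      positivity
    · have := (hyt.mul hF0).sub hG0
      simpa using this
    · have := htsub.pow 2
      simpa using this
    · have h2 := hFlim.div_const 2
      refine h2.congr fun y => ?_
      rw [div_div, mul_comm]
  -- continuity of f from the right at a
  have hfl : Filter.Tendsto f (nhdsWithin a (Ioi a)) (nhds (f a)) :=
    (hf.continuousWithinAt (left_mem_Icc.2 hab.le)).mono_of_mem_nhdsWithin
      (Icc_mem_nhdsGT_of_mem ⟨le_refl a, hab⟩)
  have hfa2 : (0:ℝ) < f a ^ 2 := by positivity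
  have key : Filter.Tendsto
      (fun y => f y * ((y * F y - G y) / (y - a) ^ 2) / (F y / (y - a)) ^ 2)
      (nhdsWithin a (Ioi a)) (nhds (f a * (f a / 2) / (f a) ^ 2)) :=
    (hfl.mul hlhop).div (hFlim.pow 2) (ne_of_gt hfa2)
  have hval : f a * (f a / 2) / (f a) ^ 2 = 1 / 2 := by
    field_simp
  rw [hval] at key
  refine key.congr' ?_
  filter_upwards [Ioo_mem_nhdsGT_of_mem ⟨le_refl a, hab⟩] with y hy
  have ht : y - a ≠ 0 := sub_ne_zero.2 (ne_of_gt hy.1)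
  have h1 : IntervalIntegrable f volume a y :=
    (hf.mono (by rw [uIcc_of_le hy.1.le]; exact Icc_subset_Icc le_rfl hy.2.le)).intervalIntegrable
  have h2 : IntervalIntegrable (fun x => x * f x) volume a y :=
    (hxf.mono (by rw [uIcc_of_le hy.1.le]; exact Icc_subset_Icc le_rfl hy.2.le)).intervalIntegrable
  have hN : (∫ x in a..y, (y - x) * f x) = y * F y - G y := by
    have : ∀ x, (y - x) * f x = y * f x - x * f x := fun x => by ring
    simp_rw [this]
    rw [intervalIntegral.integral_sub (h1.const_mul y) h2,
      intervalIntegral.integral_const_mul]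
  rw [hN]
  by_cases hF : F y = 0
  · have hF' : (∫ x in a..y, f x) = 0 := hF
    rw [hF]
    simp [hF']
  · field_simp
    change _ = _ / F y ^ 2
    field_simp
end
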